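/- Let h: S¹ → S¹ be a homeomorphism such that for every rotation R_t of the circle there exists a C¹ diffeomorphism f_t of S¹ with h ∘ R_t = f_t ∘ h. Then h is differentiable at every point of S¹ with nonvanishing derivative. -/

import Mathlib

abbrev S1 : Type := AddCircle (1 : ℝ)

lemma coe_eq_coe_iff_S1 (a b : ℝ) : ((a : S1) = (b : S1)) ↔ ∃ n : ℤ, a - b = n := by
  rw [show ((a : S1) = (b : S1)) ↔ a - b ∈ AddSubgroup.zmultiples (1:ℝ) from
    QuotientAddGroup.eq_iff_sub_mem]
  simp [AddSubgroup.mem_zmultiples_iff, eq_comm]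

lemma int_valued_const {g : ℝ → ℝ} (hg : Continuous g)
    (hint : ∀ y, ∃ n : ℤ, g y = n) (a b : ℝ) : g a = g b := by
  have hclopen : IsClopen {y : ℝ | g y = g b} := by
    constructor
    · exact isClosed_eq hg continuous_const
    · rw [isOpen_iff_mem_nhds]
      intro y hy
      have h1 : ∀ᶠ z in nhds y, g z ∈ Set.Ioo (g y - 1) (g y + 1) :=
        hg.continuousAt.preimage_mem_nhds (Ioo_mem_nhds (by linarith) (by linarith))
      filter_upwards [h1] with z hz
      obtain ⟨n, hn⟩ := hint z
      obtain ⟨m, hm⟩ := hint y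
      have : n = m := by
        simp only [Set.mem_Ioo] at hz
        have e1 : (n : ℝ) - m < 1 := by rw [← hn, ← hm]; linarith [hz.1, hz.2]
        have e2 : (-1 : ℝ) < (n : ℝ) - m := by rw [← hn, ← hm]; linarith [hz.1, hz.2]
        have e1' : n - m < 1 := by exact_mod_cast e1
        have e2' : (-1 : ℤ) < n - m := by exact_mod_cast e2
        omega
      have : g z = g y := by rw [hn, hm, this]
      simpa [Set.mem_setOf_eq, this] using hy
  have := hclopen.eq_univ (s := {y : ℝ | g y = g b}) ⟨b, rfl⟩
  have ha : a ∈ Set.univ := Set.mem_univ a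
  rw [← this] at ha
  exact ha

theorem conjugating_rotations_implies_differentiable
    (h : Equiv.Perm S1) (hcont : Continuous h)
    (H : ℝ → ℝ) (hHcont : Continuous H)
    (hlift : ∀ x : ℝ, h ((x : ℝ) : S1) = ((H x : ℝ) : S1))
    (hrot : ∀ t : ℝ, ∃ f : Equiv.Perm S1, ∃ Fl : ℝ → ℝ,
      ContDiff ℝ 1 Fl ∧ (∀ x : ℝ, deriv Fl x ≠ 0) ∧
      (∀ x : ℝ, f ((x : ℝ) : S1) = ((Fl x : ℝ) : S1)) ∧
      ∀ x : S1, h (x + ((t : ℝ) : S1)) = f (h x)) :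
    ∀ x : ℝ, DifferentiableAt ℝ H x ∧ deriv H x ≠ 0 := by
  -- basic injectivity consequence
  have hinj : ∀ a b : ℝ, H a = H b → ∃ n : ℤ, a - b = n := by
    intro a b hab
    have : h ((a : ℝ) : S1) = h ((b : ℝ) : S1) := by
      rw [hlift, hlift, hab]
    exact (coe_eq_coe_iff_S1 a b).1 (h.injective this)
  -- transport of differentiability
  have key : ∀ x₀ : ℝ, DifferentiableAt ℝ H x₀ → ∀ x : ℝ,
      DifferentiableAt ℝ H x ∧ ∃ C : ℝ, C ≠ 0 ∧ deriv H x = C * deriv H x₀ := by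
    intro x₀ hd x
    set t : ℝ := x - x₀ with ht
    obtain ⟨f, Fl, hF1, hF2, hF3, hF4⟩ := hrot t
    have hFlc : Continuous Fl := hF1.continuous
    -- the lift identity mod 1
    have hg : ∀ y : ℝ, ∃ n : ℤ, (H (y + t) - Fl (H y)) = n := by
      intro y
      have h1 : h (((y + t : ℝ)) : S1) = f (h ((y : ℝ) : S1)) := by
        have := hF4 ((y : ℝ) : S1)
        rw [← this]
        congr 1
      rw [hlift, hlift, hF3] at h1
      exact (coe_eq_coe_iff_S1 _ _).1 h1
    have hgc : Continuous (fun y => H (y + t) - Fl (H y)) :=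
      (hHcont.comp (continuous_id.add continuous_const)).sub (hFlc.comp hHcont)
    have hconst : ∀ y : ℝ, H (y + t) - Fl (H y) = H (0 + t) - Fl (H 0) :=
      fun y => int_valued_const hgc hg y 0
    set c : ℝ := H (0 + t) - Fl (H 0) with hc
    have heq : ∀ u : ℝ, H u = Fl (H (u - t)) + c := by
      intro u
      have := hconst (u - t)
      rw [sub_add_cancel] at this
      linarith [this]
    -- differentiate
    have hdFl : HasDerivAt Fl (deriv Fl (H x₀)) (H x₀) :=
      ((hF1.differentiable one_ne_zero) (H x₀)).hasDerivAt
    have h1 : HasDerivAt (fun u : ℝ => u - t) 1 x := (hasDerivAt_id x).sub_const t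
    have hdH : HasDerivAt H (deriv H x₀) x₀ := hd.hasDerivAt
    have hxt : x - t = x₀ := by rw [ht]; ring
    have hdH' : HasDerivAt H (deriv H x₀) (x - t) := by rw [hxt]; exact hdH
    have h2 : HasDerivAt (fun u : ℝ => H (u - t)) (deriv H x₀ * 1) x := by
      simpa [Function.comp_def] using HasDerivAt.comp x hdH' h1
    have hdFl' : HasDerivAt Fl (deriv Fl (H x₀)) (H (x - t)) := by rw [hxt]; exact hdFl
    have h3 : HasDerivAt (fun u : ℝ => Fl (H (u - t)))
        (deriv Fl (H x₀) * (deriv H x₀ * 1)) x := by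
      simpa [Function.comp_def] using HasDerivAt.comp x hdFl' h2
    have h4 : HasDerivAt (fun u : ℝ => Fl (H (u - t)) + c)
        (deriv Fl (H x₀) * (deriv H x₀ * 1)) x := h3.add_const c
    have h5 : HasDerivAt H (deriv Fl (H x₀) * (deriv H x₀ * 1)) x := by
      have hfe : (fun u : ℝ => Fl (H (u - t)) + c) = H := funext fun u => (heq u).symm
      rwa [hfe] at h4
    refine ⟨h5.differentiableAt, deriv Fl (H x₀), hF2 _, ?_⟩
    rw [h5.deriv]; ring
  -- find a point of differentiability using monotonicity
  have hInj : Set.InjOn H (Set.Icc (0:ℝ) (1/2)) := by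
    intro a ha b hb hab
    obtain ⟨n, hn⟩ := hinj a b hab
    have : n = 0 := by
      simp only [Set.mem_Icc] at ha hb
      have h1 : (n : ℝ) < 1 := by rw [← hn]; linarith [ha.2, hb.1]
      have h2 : (-1 : ℝ) < n := by rw [← hn]; linarith [ha.1, hb.2]
      have h1' : n < 1 := by exact_mod_cast h1
      have h2' : (-1 : ℤ) < n := by exact_mod_cast h2
      omega
    rw [this] at hn
    push_cast at hn
    linarith
  have hmono := ContinuousOn.strictMonoOn_of_injOn_Icc' (by norm_num : (0:ℝ) ≤ 1/2)
    hHcont.continuousOn hInj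
  -- extract a differentiability point in Ioo 0 (1/2)
  have hx₀ : ∃ x₀ : ℝ, DifferentiableAt ℝ H x₀ := by
    have hne : MeasureTheory.volume.restrict (Set.Ioo (0:ℝ) (1/2)) ≠ 0 := by
      intro hcontr
      rw [MeasureTheory.Measure.restrict_eq_zero] at hcontr
      simp [Real.volume_Ioo] at hcontr
    have : Filter.NeBot (MeasureTheory.ae (MeasureTheory.volume.restrict (Set.Ioo (0:ℝ) (1/2)))) :=
      MeasureTheory.ae_neBot.2 hne
    rcases hmono with hm | hm
    · have hmo : MonotoneOn H (Set.Ioo (0:ℝ) (1/2)) :=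
        (hm.monotoneOn).mono Set.Ioo_subset_Icc_self
      have hae := hmo.ae_differentiableWithinAt measurableSet_Ioo
      have hmem := MeasureTheory.ae_restrict_mem (μ := MeasureTheory.volume) (measurableSet_Ioo (a := (0:ℝ)) (b := 1/2))
      obtain ⟨x₀, hx1, hx2⟩ := (hae.and hmem).exists
      exact ⟨x₀, hx1.differentiableAt (isOpen_Ioo.mem_nhds hx2)⟩
    · have hmo : MonotoneOn (fun y => -H y) (Set.Ioo (0:ℝ) (1/2)) := by
        intro a ha b hb hab
        simp only [neg_le_neg_iff]
        rcases eq_or_lt_of_le hab with rfl | hlt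
        · exact le_refl _
        · exact (hm (Set.Ioo_subset_Icc_self ha) (Set.Ioo_subset_Icc_self hb) hlt).le
      have hae := hmo.ae_differentiableWithinAt measurableSet_Ioo
      have hmem := MeasureTheory.ae_restrict_mem (μ := MeasureTheory.volume) (measurableSet_Ioo (a := (0:ℝ)) (b := 1/2))
      obtain ⟨x₀, hx1, hx2⟩ := (hae.and hmem).exists
      have : DifferentiableAt ℝ (fun y => -H y) x₀ :=
        hx1.differentiableAt (isOpen_Ioo.mem_nhds hx2)
      have := this.neg
      refine ⟨x₀, by simpa using this⟩
  obtain ⟨x₀, hdx₀⟩ := hx₀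
  -- the derivative at x₀ is nonzero
  have hd0 : deriv H x₀ ≠ 0 := by
    intro h0
    have hdiff : Differentiable ℝ H := fun x => (key x₀ hdx₀ x).1
    have hder : ∀ x, deriv H x = 0 := by
      intro x
      obtain ⟨_, C, _, hC⟩ := key x₀ hdx₀ x
      rw [hC, h0, mul_zero]
    have hconst := is_const_of_deriv_eq_zero hdiff hder (1/2) 0
    obtain ⟨n, hn⟩ := hinj (1/2) 0 hconst
    simp only [sub_zero] at hn
    have : (2 : ℝ) * n = 1 := by rw [← hn]; norm_num
    have : (2 : ℤ) * n = 1 := by exact_mod_cast this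
    omega
  intro x
  obtain ⟨hdx, C, hC0, hC⟩ := key x₀ hdx₀ x
  exact ⟨hdx, by rw [hC]; exact mul_ne_zero hC0 hd0⟩
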